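/- Let k ≥ 1 be an integer and let f : ℕ → ℂ satisfy f(m) ≠ 0 for all m ≥ 1, with a constant C > 0 such that |f(m)^{-k}| ≤ C for all m ≥ 1. Then for all complex numbers r and z, ∑_{n≥1} r^n z^n / (n! · f(n)^k) = e^{rz} · ∑_{j≥1} (1/j!) (∑_{m=1}^{j} C(j,m) (-1)^{j-m} / f(m)^k) · (rz)^j, where both series converge absolutely and C(j,m) denotes the binomial coefficient. -/

import Mathlib

/-- Exponential series case of the generalized zeta series transformation. -/
theorem stmt_1 (k : ℕ) (hk : 1 ≤ k) (f : ℕ → ℂ)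
    (hf : ∀ m : ℕ, 1 ≤ m → f m ≠ 0) (C : ℝ) (hC : 0 < C)
    (hbound : ∀ m : ℕ, 1 ≤ m → ‖(f m ^ k)⁻¹‖ ≤ C)
    (r z : ℂ) :
    Summable (fun n : ℕ =>
      r ^ (n + 1) * z ^ (n + 1) / ((Nat.factorial (n + 1) : ℂ) * f (n + 1) ^ k)) ∧
    Summable (fun j : ℕ =>
      (1 / (Nat.factorial (j + 1) : ℂ)) *
        (∑ m ∈ Finset.Icc 1 (j + 1),
          ((j + 1).choose m : ℂ) * (-1) ^ (j + 1 - m) / f m ^ k) *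
        (r * z) ^ (j + 1)) ∧
    (∑' n : ℕ, r ^ (n + 1) * z ^ (n + 1) / ((Nat.factorial (n + 1) : ℂ) * f (n + 1) ^ k)) =
      Complex.exp (r * z) *
        ∑' j : ℕ,
          (1 / (Nat.factorial (j + 1) : ℂ)) *
            (∑ m ∈ Finset.Icc 1 (j + 1),
              ((j + 1).choose m : ℂ) * (-1) ^ (j + 1 - m) / f m ^ k) *
            (r * z) ^ (j + 1) := by
  set w : ℂ := r * z with hw
  set c : ℕ → ℂ := fun n => if n = 0 then 0 else (f n ^ k)⁻¹ with hc
  set A : ℕ → ℂ := fun n => c n * w ^ n / (Nat.factorial n : ℂ) with hA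
  set B : ℕ → ℂ := fun j =>
    (1 / (Nat.factorial j : ℂ)) *
      (∑ m ∈ Finset.Icc 1 j, (j.choose m : ℂ) * (-1) ^ (j - m) / f m ^ k) * w ^ j with hB
  set E : ℕ → ℂ := fun i => (-w) ^ i / (Nat.factorial i : ℂ) with hE
  -- norm bounds
  have hcC : ∀ n, ‖c n‖ ≤ C := by
    intro n
    rcases Nat.eq_zero_or_pos n with h | h
    · simp [hc, h, hC.le]
    · simp only [hc, Nat.pos_iff_ne_zero.mp h, if_false]
      exact hbound n h
  have hAnorm : Summable fun n => ‖A n‖ := by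
    apply Summable.of_nonneg_of_le (fun n => norm_nonneg _)
      (f := fun n => C * (‖w‖ ^ n / (Nat.factorial n : ℝ)))
    · intro n
      have : ‖A n‖ = ‖c n‖ * ‖w‖ ^ n / (Nat.factorial n : ℝ) := by
        simp [hA, norm_div, norm_mul, norm_pow]
      rw [this, mul_div_assoc]
      gcongr
      exact hcC n
    · exact (Real.summable_pow_div_factorial ‖w‖).mul_left C
  have hgbound : ∀ j : ℕ,
      ‖∑ m ∈ Finset.Icc 1 j, (j.choose m : ℂ) * (-1) ^ (j - m) / f m ^ k‖ ≤ C * 2 ^ j := by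
    intro j
    calc ‖∑ m ∈ Finset.Icc 1 j, (j.choose m : ℂ) * (-1) ^ (j - m) / f m ^ k‖
        ≤ ∑ m ∈ Finset.Icc 1 j, ‖(j.choose m : ℂ) * (-1) ^ (j - m) / f m ^ k‖ :=
          norm_sum_le _ _
      _ ≤ ∑ m ∈ Finset.Icc 1 j, (j.choose m : ℝ) * C := by
          apply Finset.sum_le_sum
          intro m hm
          have hm1 : 1 ≤ m := (Finset.mem_Icc.mp hm).1
          have : ‖(j.choose m : ℂ) * (-1) ^ (j - m) / f m ^ k‖
              = (j.choose m : ℝ) * ‖(f m ^ k)⁻¹‖ := by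
            rw [div_eq_mul_inv, norm_mul, norm_mul, norm_pow, norm_neg, norm_one,
              one_pow, mul_one]
            simp
          rw [this]
          exact mul_le_mul_of_nonneg_left (hbound m hm1) (by positivity)
      _ ≤ ∑ m ∈ Finset.range (j + 1), (j.choose m : ℝ) * C := by
          apply Finset.sum_le_sum_of_subset_of_nonneg
          · intro m hm
            simp only [Finset.mem_Icc] at hm
            exact Finset.mem_range.mpr (Nat.lt_succ_of_le hm.2)
          · intro m _ _; positivity
      _ = C * 2 ^ j := by
          rw [← Finset.sum_mul, mul_comm]
          norm_cast
          rw [Nat.sum_range_choose]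
  have hBnorm : Summable fun j => ‖B j‖ := by
    apply Summable.of_nonneg_of_le (fun n => norm_nonneg _)
      (f := fun j => C * ((2 * ‖w‖) ^ j / (Nat.factorial j : ℝ)))
    · intro j
      have h1 : ‖B j‖ = (1 / (Nat.factorial j : ℝ)) *
          ‖∑ m ∈ Finset.Icc 1 j, (j.choose m : ℂ) * (-1) ^ (j - m) / f m ^ k‖ * ‖w‖ ^ j := by
        simp [hB, norm_mul, norm_div, norm_pow]
      rw [h1]
      have h2 := hgbound j
      calc (1 / (Nat.factorial j : ℝ)) *
          ‖∑ m ∈ Finset.Icc 1 j, (j.choose m : ℂ) * (-1) ^ (j - m) / f m ^ k‖ * ‖w‖ ^ j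
          ≤ (1 / (Nat.factorial j : ℝ)) * (C * 2 ^ j) * ‖w‖ ^ j := by
            apply mul_le_mul_of_nonneg_right _ (by positivity)
            exact mul_le_mul_of_nonneg_left h2 (by positivity)
        _ = C * ((2 * ‖w‖) ^ j / (Nat.factorial j : ℝ)) := by
            rw [mul_pow]; field_simp
    · exact (Real.summable_pow_div_factorial (2 * ‖w‖)).mul_left C
  have hEnorm : Summable fun i => ‖E i‖ := by
    have : ∀ i, ‖E i‖ = ‖w‖ ^ i / (Nat.factorial i : ℝ) := by
      intro i; simp [hE, norm_div, norm_pow]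
    simpa [this] using Real.summable_pow_div_factorial ‖w‖
  have hSA : Summable A := hAnorm.of_norm
  have hSB : Summable B := hBnorm.of_norm
  have hSE : Summable E := hEnorm.of_norm
  -- Cauchy product identity
  have hkey : (∑' n, A n) * (∑' i, E i) = ∑' j, B j := by
    rw [tsum_mul_tsum_eq_tsum_sum_antidiagonal_of_summable_norm hAnorm hEnorm]
    apply tsum_congr
    intro j
    rw [Finset.Nat.sum_antidiagonal_eq_sum_range_succ_mk]
    have hsub : ∑ m ∈ Finset.range (j + 1), A m * E (j - m)
        = ∑ m ∈ Finset.Icc 1 j, A m * E (j - m) := by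
      symm
      apply Finset.sum_subset
      · intro m hm
        simp only [Finset.mem_Icc] at hm
        exact Finset.mem_range.mpr (Nat.lt_succ_of_le hm.2)
      · intro m hm hm'
        have : m = 0 := by
          simp only [Finset.mem_range, Finset.mem_Icc, not_and, not_le] at hm hm'
          omega
        simp [this, hA, hc]
    rw [hsub]
    simp only [hB]
    rw [Finset.mul_sum, Finset.sum_mul]
    apply Finset.sum_congr rfl
    intro m hm
    obtain ⟨hm1, hm2⟩ := Finset.mem_Icc.mp hm
    have hm0 : m ≠ 0 := by omega
    have hfm : f m ^ k ≠ 0 := pow_ne_zero _ (hf m hm1)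
    have hwj : w ^ m * w ^ (j - m) = w ^ j := by
      rw [← pow_add, Nat.add_sub_cancel' hm2]
    have hchoose : (j.choose m : ℂ) =
        (Nat.factorial j : ℂ) / ((Nat.factorial m : ℂ) * (Nat.factorial (j - m) : ℂ)) :=
      Nat.cast_choose ℂ hm2
    simp only [hA, hE, hc, hm0, if_false]
    rw [hchoose, neg_pow]
    have hfacm : (Nat.factorial m : ℂ) ≠ 0 := Nat.cast_ne_zero.mpr (Nat.factorial_ne_zero m)
    have hfacjm : (Nat.factorial (j - m) : ℂ) ≠ 0 :=
      Nat.cast_ne_zero.mpr (Nat.factorial_ne_zero (j - m))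
    have hfacj : (Nat.factorial j : ℂ) ≠ 0 := Nat.cast_ne_zero.mpr (Nat.factorial_ne_zero j)
    field_simp
    rw [← hwj]
  have hEexp : (∑' i, E i) = Complex.exp (-w) := by
    rw [Complex.exp_eq_exp_ℂ, NormedSpace.exp_eq_tsum_div]
  -- rewrite statement terms
  have heq1 : (fun n : ℕ => r ^ (n + 1) * z ^ (n + 1) /
      ((Nat.factorial (n + 1) : ℂ) * f (n + 1) ^ k)) = fun n => A (n + 1) := by
    funext n
    simp only [hA, hc, Nat.succ_ne_zero, if_false, hw, ← mul_pow]
    ring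
  have heq2 : (fun j : ℕ => (1 / (Nat.factorial (j + 1) : ℂ)) *
        (∑ m ∈ Finset.Icc 1 (j + 1),
          ((j + 1).choose m : ℂ) * (-1) ^ (j + 1 - m) / f m ^ k) * w ^ (j + 1))
      = fun j => B (j + 1) := by
    funext j
    simp only [hB]
  refine ⟨?_, ?_, ?_⟩
  · rw [heq1]
    exact (summable_nat_add_iff 1).mpr hSA
  · rw [heq2]
    exact (summable_nat_add_iff 1).mpr hSB
  · have hA0 : A 0 = 0 := by simp [hA, hc]
    have hB0 : B 0 = 0 := by simp [hB]
    have htA : (∑' n, A (n + 1)) = ∑' n, A n := by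
      rw [Summable.tsum_eq_zero_add hSA, hA0, zero_add]
    have htB : (∑' j, B (j + 1)) = ∑' j, B j := by
      rw [Summable.tsum_eq_zero_add hSB, hB0, zero_add]
    rw [heq1, heq2]
    calc (∑' n, A (n + 1)) = ∑' n, A n := htA
      _ = Complex.exp w * ∑' j, B (j + 1) := by
          rw [htB, ← hkey, hEexp, mul_comm (∑' n, A n), ← mul_assoc,
            ← Complex.exp_add, add_neg_cancel, Complex.exp_zero, one_mul]
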